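/- Let n ≥ 3, C ≥ 1 and B ≥ 1 with B^{n−1} ≥ 2 C ‖Z‖², where Z ∈ ℂⁿ. Let λ_1 ≥ λ_2 ≥ ⋯ ≥ λ_n > 0, let 0 < ε ≤ 1, and set s = Σ_i λ_i |Z_i|² + ε. Assume: (a) Σ_i λ_i^{-1} − ‖Z‖²/s ≤ 1/B; (b) Π_i λ_i ≤ C s. Then λ_1 ≤ 2C + B. -/

import Mathlib

/-- A cheap AM–GM-type bound: a product of nonnegative reals is at most
the `k`-th power of their sum divided by `4^(k-1)`. -/
theorem prod_le_sum_pow_div {ι : Type*} (S : Finset ι) (f : ι → ℝ)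
    (hf : ∀ i ∈ S, 0 ≤ f i) :
    ∏ i ∈ S, f i ≤ (∑ i ∈ S, f i) ^ S.card / 4 ^ (S.card - 1) := by
  induction S using Finset.cons_induction with
  | empty => simp
  | cons a S ha IH =>
    have hx : 0 ≤ f a := hf a (Finset.mem_cons_self a S)
    have hf' : ∀ i ∈ S, 0 ≤ f i := fun i hi => hf i (Finset.mem_cons_of_mem hi)
    have hT : 0 ≤ ∑ i ∈ S, f i := Finset.sum_nonneg hf'
    rw [Finset.prod_cons, Finset.sum_cons, Finset.card_cons]
    set x := f a
    set T := ∑ i ∈ S, f i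
    rcases Nat.eq_zero_or_pos S.card with hm | hm
    · have hS : S = ∅ := Finset.card_eq_zero.mp hm
      subst hS
      simpa using hT
    · have IH' := IH hf'
      have hxP : x * (∏ i ∈ S, f i) ≤ x * (T ^ S.card / 4 ^ (S.card - 1)) :=
        mul_le_mul_of_nonneg_left IH' hx
      refine hxP.trans ?_
      have h4 : (0:ℝ) < 4 ^ (S.card - 1) := by positivity
      have h4' : (0:ℝ) < 4 ^ S.card := by positivity
      have key : 4 * (x * T ^ S.card) ≤ (x + T) ^ (S.card + 1) := by
        have h2 : 4 * x * T ≤ (x + T) ^ 2 := by nlinarith [sq_nonneg (x - T)]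
        have h3 : T ^ (S.card - 1) ≤ (x + T) ^ (S.card - 1) :=
          pow_le_pow_left₀ hT (by linarith) _
        have hTpow : (0:ℝ) ≤ T ^ (S.card - 1) := by positivity
        have e1 : (x + T) ^ (S.card + 1) = (x + T) ^ 2 * (x + T) ^ (S.card - 1) := by
          rw [← pow_add]
          congr 1
          omega
        have e2 : 4 * (x * T ^ S.card) = (4 * x * T) * T ^ (S.card - 1) := by
          conv_lhs => rw [show S.card = (S.card - 1) + 1 by omega]
          rw [pow_succ]; ring
        rw [e1, e2]
        exact mul_le_mul h2 h3 hTpow (sq_nonneg _)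
      simp only [Nat.add_sub_cancel]
      rw [mul_div_assoc', div_le_div_iff₀ h4 h4']
      have e4 : (4:ℝ) ^ S.card = 4 * 4 ^ (S.card - 1) := by
        conv_lhs => rw [show S.card = (S.card - 1) + 1 by omega]
        rw [pow_succ]; ring
      calc x * T ^ S.card * 4 ^ S.card
          = (4 * (x * T ^ S.card)) * 4 ^ (S.card - 1) := by rw [e4]; ring
        _ ≤ (x + T) ^ (S.card + 1) * 4 ^ (S.card - 1) :=
            mul_le_mul_of_nonneg_right key (le_of_lt h4)

/-- Weierstrass product inequality. -/
theorem one_sub_sum_le_prod_one_sub' {ι : Type*} (S : Finset ι) (f : ι → ℝ)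
    (h0 : ∀ i ∈ S, 0 ≤ f i) (h1 : ∀ i ∈ S, f i ≤ 1) :
    1 - ∑ i ∈ S, f i ≤ ∏ i ∈ S, (1 - f i) := by
  induction S using Finset.cons_induction with
  | empty => simp
  | cons a S ha IH =>
    have hx0 : 0 ≤ f a := h0 a (Finset.mem_cons_self a S)
    have hx1 : f a ≤ 1 := h1 a (Finset.mem_cons_self a S)
    have h0' : ∀ i ∈ S, 0 ≤ f i := fun i hi => h0 i (Finset.mem_cons_of_mem hi)
    have h1' : ∀ i ∈ S, f i ≤ 1 := fun i hi => h1 i (Finset.mem_cons_of_mem hi)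
    have hT : 0 ≤ ∑ i ∈ S, f i := Finset.sum_nonneg h0'
    rw [Finset.prod_cons, Finset.sum_cons]
    have IH' := IH h0' h1'
    nlinarith [IH', mul_nonneg (sub_nonneg.mpr hx1) hT]

set_option maxHeartbeats 1000000 in
/-- Algebraic content of Case 2 in the proof of Proposition 1.4: if `n ≥ 3`,
`C, B ≥ 1` with `B^{n−1} ≥ 2C‖Z‖²`, `λ_1 ≥ ⋯ ≥ λ_n > 0`, `0 < ε ≤ 1`,
`s = Σ λ_i|Z_i|² + ε`, and (a) `Σ λ_i⁻¹ − ‖Z‖²/s ≤ 1/B`, (b) `Π λ_i ≤ C s`,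
then `λ_1 ≤ 2C + B`. -/
theorem stmt6 (n : ℕ) (hn : 3 ≤ n) (C B : ℝ) (hC : 1 ≤ C) (hB : 1 ≤ B)
    (Z : Fin n → ℂ) (hBZ : 2 * C * (∑ i, Complex.normSq (Z i)) ≤ B ^ (n - 1))
    (lam : Fin n → ℝ) (hpos : ∀ i, 0 < lam i)
    (hmono : ∀ i j : Fin n, i ≤ j → lam j ≤ lam i)
    (ε : ℝ) (hε : 0 < ε) (hε1 : ε ≤ 1)
    (s : ℝ) (hs : s = (∑ i, lam i * Complex.normSq (Z i)) + ε)
    (ha : (∑ i, (lam i)⁻¹) - (∑ i, Complex.normSq (Z i)) / s ≤ 1 / B)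
    (hb : ∏ i, lam i ≤ C * s) :
    lam ⟨0, by omega⟩ ≤ 2 * C + B := by
  have hBpos : (0:ℝ) < B := by linarith
  have hCpos : (0:ℝ) < C := by linarith
  set z : Fin n → ℝ := fun i => Complex.normSq (Z i) with hzdef
  have hz : ∀ i, 0 ≤ z i := fun i => Complex.normSq_nonneg _
  set i0 : Fin n := ⟨0, by omega⟩ with hi0def
  show lam i0 ≤ 2 * C + B
  have hspos : 0 < s := by
    rw [hs]
    have h1 : 0 ≤ ∑ i, lam i * z i :=
      Finset.sum_nonneg fun i _ => mul_nonneg (hpos i).le (hz i)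
    linarith
  have hsum : ∑ i, lam i * z i = s - ε := by rw [hs]; ring
  have hterm : ∀ i : Fin n, lam i * z i ≤ s - ε := by
    intro i
    rw [← hsum]
    exact Finset.single_le_sum (fun j _ => mul_nonneg (hpos j).le (hz j)) (Finset.mem_univ i)
  have hnum : ∀ i : Fin n, 0 < s - lam i * z i := fun i => by have := hterm i; linarith
  set βv : Fin n → ℝ := fun i => (lam i)⁻¹ - z i / s with hβdef
  have hβ_eq : ∀ i, βv i = (s - lam i * z i) / (lam i * s) := by
    intro i
    have h1 : lam i ≠ 0 := ne_of_gt (hpos i)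
    have h2 : s ≠ 0 := ne_of_gt hspos
    show (lam i)⁻¹ - z i / s = _
    field_simp
  have hβpos : ∀ i, 0 < βv i := fun i => by
    rw [hβ_eq i]; exact div_pos (hnum i) (mul_pos (hpos i) hspos)
  have hβsum : ∑ i, βv i ≤ 1 / B := by
    have e : ∑ i, βv i = (∑ i, (lam i)⁻¹) - (∑ i, z i) / s := by
      rw [Finset.sum_sub_distrib, Finset.sum_div]
    rw [e]; exact ha
  have hβle : ∀ i, βv i ≤ 1 / B := fun i =>
    le_trans (Finset.single_le_sum (fun j _ => (hβpos j).le) (Finset.mem_univ i)) hβsum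
  have hlamβ : ∀ i, lam i * βv i = (s - lam i * z i) / s := by
    intro i
    have h1 : lam i ≠ 0 := ne_of_gt (hpos i)
    have h2 : s ≠ 0 := ne_of_gt hspos
    rw [hβ_eq i]
    field_simp
  have hlam_le : ∀ i, lam i ≤ lam i0 := fun i => hmono i0 i (by simp [hi0def, Fin.le_def])
  have hlam0 : 0 < lam i0 := hpos i0
  -- Step 1 : 2B ≤ lam i0
  have h2B : 2 * B ≤ lam i0 := by
    have h1 : ∀ i : Fin n, (s - lam i * z i) / s ≤ lam i0 * βv i := by
      intro i
      rw [← hlamβ i]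
      exact mul_le_mul_of_nonneg_right (hlam_le i) (hβpos i).le
    have h2 : (∑ i : Fin n, (s - lam i * z i) / s) ≤ lam i0 * ∑ i, βv i := by
      rw [Finset.mul_sum]
      exact Finset.sum_le_sum fun i _ => h1 i
    have h3 : (∑ i : Fin n, (s - lam i * z i) / s) = ((n:ℝ) * s - (s - ε)) / s := by
      rw [← Finset.sum_div]
      congr 1
      rw [Finset.sum_sub_distrib, hsum, Finset.sum_const, Finset.card_univ,
        Fintype.card_fin, nsmul_eq_mul]
    have hn3 : (3:ℝ) ≤ (n:ℝ) := by exact_mod_cast hn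
    have h4 : (2:ℝ) ≤ ((n:ℝ) * s - (s - ε)) / s := by
      rw [le_div_iff₀ hspos]
      nlinarith
    have h5 : lam i0 * ∑ i, βv i ≤ lam i0 * (1/B) := mul_le_mul_of_nonneg_left hβsum hlam0.le
    have h6 : (2:ℝ) ≤ lam i0 * (1/B) := by linarith
    rw [mul_one_div, le_div_iff₀ hBpos] at h6
    linarith
  -- Step 2 : each off-top lam j * z j is at most s/2
  have hhalf : ∀ j : Fin n, j ≠ i0 → lam j * z j ≤ s / 2 := by
    intro j hj
    have hjmem : j ∈ Finset.univ.erase i0 := Finset.mem_erase.mpr ⟨hj, Finset.mem_univ j⟩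
    set S : Finset (Fin n) := (Finset.univ.erase i0).erase j with hSdef
    have hcardS : S.card = n - 2 := by
      rw [hSdef, Finset.card_erase_of_mem hjmem,
        Finset.card_erase_of_mem (Finset.mem_univ i0), Finset.card_univ, Fintype.card_fin]
      omega
    have hsplit : ∏ i, lam i = lam i0 * (lam j * ∏ i ∈ S, lam i) := by
      rw [hSdef, Finset.mul_prod_erase _ _ hjmem, Finset.mul_prod_erase _ _ (Finset.mem_univ i0)]
    have hsumS : ∑ i ∈ S, lam i * z i = (s - ε) - lam i0 * z i0 - lam j * z j := by
      have e1 : lam i0 * z i0 + ∑ i ∈ Finset.univ.erase i0, lam i * z i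
          = ∑ i : Fin n, lam i * z i :=
        Finset.add_sum_erase _ (fun i => lam i * z i) (Finset.mem_univ i0)
      have e2 : lam j * z j + ∑ i ∈ S, lam i * z i
          = ∑ i ∈ Finset.univ.erase i0, lam i * z i := by
        rw [hSdef]
        exact Finset.add_sum_erase _ (fun i => lam i * z i) hjmem
      rw [hsum] at e1
      linarith
    have hfac : ∀ i ∈ S, B * ((s - lam i * z i)/s) ≤ lam i := by
      intro i _
      have h := hβle i
      rw [hβ_eq i, div_le_div_iff₀ (mul_pos (hpos i) hspos) hBpos] at h
      rw [← mul_div_assoc, div_le_iff₀ hspos]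
      nlinarith [h]
    have hprodS : B^(n-2) * ((lam j * z j + ε)/s) ≤ ∏ i ∈ S, lam i := by
      have h1 : ∏ i ∈ S, (B * ((s - lam i * z i)/s)) ≤ ∏ i ∈ S, lam i := by
        refine Finset.prod_le_prod (fun i _ => ?_) hfac
        have := hnum i
        positivity
      have h2 : ∏ i ∈ S, (B * ((s - lam i * z i)/s))
          = B^S.card * ∏ i ∈ S, ((s - lam i * z i)/s) := by
        rw [Finset.prod_mul_distrib, Finset.prod_const]
      have h3 : 1 - ∑ i ∈ S, (lam i * z i)/s ≤ ∏ i ∈ S, (1 - (lam i * z i)/s) := by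
        refine one_sub_sum_le_prod_one_sub' S _ (fun i _ => ?_) (fun i _ => ?_)
        · have h4 := hz i; have h5 := (hpos i).le; positivity
        · rw [div_le_one hspos]; have := hterm i; linarith
      have h4 : ∏ i ∈ S, ((s - lam i * z i)/s) = ∏ i ∈ S, (1 - (lam i * z i)/s) := by
        refine Finset.prod_congr rfl (fun i _ => ?_)
        field_simp
      have h5 : (lam j * z j + ε)/s ≤ 1 - ∑ i ∈ S, (lam i * z i)/s := by
        rw [← Finset.sum_div, hsumS]
        have h2s : s ≠ 0 := ne_of_gt hspos
        have e : 1 - ((s - ε) - lam i0 * z i0 - lam j * z j)/s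
            = (ε + lam i0 * z i0 + lam j * z j)/s := by
          field_simp
          ring
        rw [e, div_le_div_iff₀ hspos hspos]
        have h0 : 0 ≤ lam i0 * z i0 := mul_nonneg hlam0.le (hz i0)
        nlinarith [mul_nonneg h0 hspos.le]
      calc B^(n-2) * ((lam j * z j + ε)/s)
          ≤ B^(n-2) * ∏ i ∈ S, (1 - (lam i * z i)/s) :=
            mul_le_mul_of_nonneg_left (h5.trans h3) (by positivity)
        _ = B^S.card * ∏ i ∈ S, ((s - lam i * z i)/s) := by rw [h4, hcardS]
        _ = ∏ i ∈ S, (B * ((s - lam i * z i)/s)) := h2.symm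
        _ ≤ ∏ i ∈ S, lam i := h1
    have hq0 : 0 ≤ lam j * z j := mul_nonneg (hpos j).le (hz j)
    have hzj_le : z j ≤ ∑ i, z i := Finset.single_le_sum (fun i _ => hz i) (Finset.mem_univ j)
    have hlj : 2*C*(lam j * z j) ≤ lam j * B^(n-1) := by
      have h1 : 2*C*(z j) ≤ B^(n-1) := by
        have h2 := mul_le_mul_of_nonneg_left hzj_le (by linarith : (0:ℝ) ≤ 2*C)
        linarith
      have h3 := mul_le_mul_of_nonneg_left h1 (hpos j).le
      calc 2*C*(lam j * z j) = lam j * (2*C*(z j)) := by ring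
        _ ≤ lam j * B^(n-1) := h3
    have hbb : lam i0 * (lam j * ∏ i ∈ S, lam i) ≤ C * s := by rw [← hsplit]; exact hb
    have hA : lam i0 * lam j * B^(n-2) * (lam j * z j + ε) ≤ C*s*s := by
      have h1 : lam i0 * (lam j * (B^(n-2) * ((lam j * z j + ε)/s)))
          ≤ lam i0 * (lam j * ∏ i ∈ S, lam i) :=
        mul_le_mul_of_nonneg_left
          (mul_le_mul_of_nonneg_left hprodS (hpos j).le) hlam0.le
      have h2 := h1.trans hbb
      have e : lam i0 * (lam j * (B^(n-2) * ((lam j * z j + ε)/s)))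
          = (lam i0 * lam j * B^(n-2) * (lam j * z j + ε))/s := by ring
      rw [e, div_le_iff₀ hspos] at h2
      linarith
    have hpow : B^(n-1) = B^(n-2) * B := by
      rw [← pow_succ]
      congr 1
      omega
    have hm1 : (2*C*(lam j * z j)) * (lam i0 * (lam j * z j + ε))
        ≤ (lam j * B^(n-1)) * (lam i0 * (lam j * z j + ε)) :=
      mul_le_mul_of_nonneg_right hlj (mul_nonneg hlam0.le (by linarith))
    have hm2 : (2*C*(lam j * z j)) * (lam i0 * (lam j * z j + ε)) ≤ B * (C*s*s) := by
      have e2 : (lam j * B^(n-1)) * (lam i0*(lam j * z j + ε))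
          = B * (lam i0 * lam j * B^(n-2) * (lam j * z j + ε)) := by rw [hpow]; ring
      rw [e2] at hm1
      have h3 := mul_le_mul_of_nonneg_left hA hBpos.le
      linarith
    have hm3 : 4*B*C*((lam j * z j)*(lam j * z j)) ≤ B*(C*s*s) := by
      have hin : 0 ≤ lam i0*(lam j * z j + ε) - 2*B*(lam j * z j) := by
        nlinarith [mul_nonneg (sub_nonneg.mpr h2B) (by linarith : (0:ℝ) ≤ lam j * z j + ε),
          mul_nonneg hBpos.le hε.le]
      nlinarith [hm2, mul_nonneg (mul_nonneg (by linarith : (0:ℝ) ≤ 2*C) hq0) hin]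
    have hq2 : (lam j * z j)*(lam j * z j) ≤ (s/2)*(s/2) := by
      nlinarith [hm3, mul_pos hBpos hCpos]
    nlinarith [hq2, hq0, hspos]
  -- Step 3 : product of the non-top eigenvalues is at least B^(n-1)
  set E : Finset (Fin n) := Finset.univ.erase i0 with hEdef
  have hcardE : E.card = n - 1 := by
    rw [hEdef, Finset.card_erase_of_mem (Finset.mem_univ i0), Finset.card_univ,
      Fintype.card_fin]
  have hone : ∀ i ∈ E, (1:ℝ) ≤ lam i * (2 * βv i) := by
    intro i hi
    have hine : i ≠ i0 := (Finset.mem_erase.mp hi).1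
    have hh := hhalf i hine
    have e : lam i * (2 * βv i) = (2*(s - lam i * z i))/s := by
      have e1 : lam i * (2 * βv i) = 2*(lam i * βv i) := by ring
      rw [e1, hlamβ i]
      ring
    rw [e, le_div_iff₀ hspos]
    linarith
  have hprod1 : (1:ℝ) ≤ (∏ i ∈ E, lam i) * (∏ i ∈ E, (2*βv i)) := by
    rw [← Finset.prod_mul_distrib]
    calc (1:ℝ) = ∏ _i ∈ E, (1:ℝ) := by simp
      _ ≤ ∏ i ∈ E, (lam i * (2*βv i)) :=
        Finset.prod_le_prod (fun i _ => zero_le_one) hone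
  have hsum2β : ∑ i ∈ E, (2*βv i) ≤ 2/B := by
    have h1 : ∑ i ∈ E, βv i ≤ ∑ i, βv i :=
      Finset.sum_le_sum_of_subset_of_nonneg (Finset.subset_univ E)
        (fun i _ _ => (hβpos i).le)
    have h2 : ∑ i ∈ E, (2*βv i) = 2 * ∑ i ∈ E, βv i := by rw [Finset.mul_sum]
    have h3 : (2:ℝ)/B = 2*(1/B) := by ring
    rw [h2, h3]
    have : ∑ i ∈ E, βv i ≤ 1/B := le_trans h1 hβsum
    linarith
  have hQle : ∏ i ∈ E, (2*βv i) ≤ (2/B)^(n-1)/4^(n-2) := by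
    have h1 := prod_le_sum_pow_div E (fun i => 2*βv i)
      (fun i _ => by show (0:ℝ) ≤ 2*βv i; linarith [hβpos i])
    rw [hcardE] at h1
    have e : n - 1 - 1 = n - 2 := by omega
    rw [e] at h1
    refine h1.trans ?_
    have hnn : 0 ≤ ∑ i ∈ E, 2*βv i :=
      Finset.sum_nonneg fun i _ => by linarith [hβpos i]
    have h2 := pow_le_pow_left₀ hnn hsum2β (n-1)
    have h4pos : (0:ℝ) < 4^(n-2) := by positivity
    exact (div_le_div_iff_of_pos_right h4pos).mpr h2
  have h24 : ((2:ℝ)/B)^(n-1)/4^(n-2) ≤ 1/B^(n-1) := by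
    have h2 : (2:ℝ)^(n-1) ≤ 4^(n-2) := by
      have e4 : (4:ℝ)^(n-2) = 2^(2*(n-2)) := by
        rw [show (4:ℝ) = 2^2 by norm_num, ← pow_mul]
      rw [e4]
      exact pow_le_pow_right₀ one_le_two (by omega)
    have hBp : (0:ℝ) < B^(n-1) := by positivity
    have h4p : (0:ℝ) < (4:ℝ)^(n-2) := by positivity
    rw [div_pow, div_div, div_le_div_iff₀ (by positivity) hBp]
    have h5 := mul_le_mul_of_nonneg_left h2 hBp.le
    nlinarith [h5]
  have hQB : ∏ i ∈ E, (2*βv i) ≤ 1/B^(n-1) := le_trans hQle h24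
  have hPpos : 0 < ∏ i ∈ E, lam i := Finset.prod_pos (fun i _ => hpos i)
  have hPE : B^(n-1) ≤ ∏ i ∈ E, lam i := by
    have h1 : (1:ℝ) ≤ (∏ i ∈ E, lam i) * (1/B^(n-1)) :=
      le_trans hprod1 (mul_le_mul_of_nonneg_left hQB hPpos.le)
    rw [mul_one_div, le_div_iff₀ (by positivity : (0:ℝ) < B^(n-1))] at h1
    linarith
  -- Step 4 : conclude
  have hsplit0 : ∏ i, lam i = lam i0 * ∏ i ∈ E, lam i := by
    rw [hEdef, Finset.mul_prod_erase _ _ (Finset.mem_univ i0)]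
  have hfin1 : lam i0 * B^(n-1) ≤ C * s := by
    calc lam i0 * B^(n-1) ≤ lam i0 * ∏ i ∈ E, lam i :=
          mul_le_mul_of_nonneg_left hPE hlam0.le
      _ = ∏ i, lam i := hsplit0.symm
      _ ≤ C*s := hb
  have hsle : s ≤ lam i0 * (∑ i, z i) + ε := by
    rw [hs]
    have h1 : ∑ i, lam i * z i ≤ ∑ i, lam i0 * z i :=
      Finset.sum_le_sum fun i _ => mul_le_mul_of_nonneg_right (hlam_le i) (hz i)
    rw [← Finset.mul_sum] at h1
    linarith
  have hf2 : C * s ≤ C * (lam i0 * (∑ i, z i) + ε) := mul_le_mul_of_nonneg_left hsle hCpos.le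
  have hf3 : lam i0 * (2*C*(∑ i, z i)) ≤ lam i0 * B^(n-1) :=
    mul_le_mul_of_nonneg_left hBZ hlam0.le
  have hBm1 : (1:ℝ) ≤ B^(n-1) := by
    have := pow_le_pow_left₀ zero_le_one hB (n-1)
    simpa using this
  have hf4 : lam i0 * 1 ≤ lam i0 * B^(n-1) := mul_le_mul_of_nonneg_left hBm1 hlam0.le
  have hf5 : C * ε ≤ C * 1 := mul_le_mul_of_nonneg_left hε1 hCpos.le
  nlinarith [hfin1, hf2, hf3, hf4, hf5]
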